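/- For a compactly supported probability measure ρ₀, the moments of the evolved measure dρ_t = K(t)e^{λ²t}dρ₀ are given explicitly by s_{2k}(t) = (Σ_{m=0}^∞ s_{2(k+m)}(0) t^m / m!) / (Σ_{m=0}^∞ s_{2m}(0) t^m / m!), where both series converge absolutely for all t ≥ 0. -/

import Mathlib

open MeasureTheory Real

/-- The time-evolved measure `dρ_t(λ) = K(t) e^{λ² t} dρ₀(λ)` with
`K(t) = (∫ e^{λ² t} dρ₀(λ))⁻¹`. -/
noncomputable def evolvedMeasure (ρ₀ : Measure ℝ) (t : ℝ) : Measure ℝ :=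
  (∫⁻ l, ENNReal.ofReal (Real.exp (l ^ 2 * t)) ∂ρ₀)⁻¹ •
    ρ₀.withDensity (fun l => ENNReal.ofReal (Real.exp (l ^ 2 * t)))

/-- The `k`-th moment of the evolved measure at time `t`. -/
noncomputable def moment (ρ₀ : Measure ℝ) (k : ℕ) (t : ℝ) : ℝ :=
  ∫ l, l ^ k ∂(evolvedMeasure ρ₀ t)

theorem stmt4 (ρ₀ : Measure ℝ) [IsProbabilityMeasure ρ₀]
    (M : ℝ) (hsupp : ρ₀ (Set.Icc (-M) M)ᶜ = 0)
    (heven : ρ₀.map (fun x => -x) = ρ₀)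
    (k : ℕ) (t : ℝ) (ht : 0 ≤ t) :
    Summable (fun m : ℕ => |moment ρ₀ (2 * (k + m)) 0| * t ^ m / m.factorial) ∧
    Summable (fun m : ℕ => |moment ρ₀ (2 * m) 0| * t ^ m / m.factorial) ∧
    moment ρ₀ (2 * k) t =
      (∑' m : ℕ, moment ρ₀ (2 * (k + m)) 0 * t ^ m / m.factorial) /
        (∑' m : ℕ, moment ρ₀ (2 * m) 0 * t ^ m / m.factorial) := by
  set C : ℝ := max M 1 with hCdef
  have hC1 : (1:ℝ) ≤ C := le_max_right _ _
  have hC0 : (0:ℝ) < C := lt_of_lt_of_le one_pos hC1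
  -- a.e. bound on |l|
  have hae : ∀ᵐ l ∂ρ₀, |l| ≤ C := by
    rw [ae_iff]
    refine measure_mono_null ?_ hsupp
    intro l hl
    simp only [Set.mem_setOf_eq, not_le] at hl
    intro hmem
    exact absurd ((abs_le.mpr hmem).trans (le_max_left M 1)) (not_le.mpr hl)
  -- integrability of monomials
  have hint : ∀ n : ℕ, Integrable (fun l : ℝ => l ^ n) ρ₀ := by
    intro n
    refine Integrable.mono' (integrable_const (C ^ n))
      ((continuous_pow n).aestronglyMeasurable) ?_
    filter_upwards [hae] with l hl
    rw [Real.norm_eq_abs, abs_pow]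
    exact pow_le_pow_left₀ (abs_nonneg l) hl n
  -- bound on moments
  have hsb : ∀ n : ℕ, |∫ l, l ^ n ∂ρ₀| ≤ C ^ n := by
    intro n
    have h := norm_integral_le_of_norm_le_const (μ := ρ₀) (C := C ^ n)
      (f := fun l : ℝ => l ^ n) (by
        filter_upwards [hae] with l hl
        rw [Real.norm_eq_abs, abs_pow]
        exact pow_le_pow_left₀ (abs_nonneg l) hl n)
    simpa using h
  -- moments at time 0
  have hev0 : evolvedMeasure ρ₀ 0 = ρ₀ := by
    unfold evolvedMeasure
    simp [Real.exp_zero]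
  have hm0 : ∀ n : ℕ, moment ρ₀ n 0 = ∫ l, l ^ n ∂ρ₀ := by
    intro n; rw [moment, hev0]
  -- summability of the bounding series
  have hbsum : ∀ j : ℕ, Summable (fun m : ℕ => C ^ (2 * (j + m)) * (t ^ m / m.factorial)) := by
    intro j
    have h := (Real.summable_pow_div_factorial (C ^ 2 * t)).mul_left (C ^ (2 * j))
    refine h.congr fun m => ?_
    rw [mul_add, pow_add, pow_mul, mul_pow]
    ring
  -- summability of the moment series
  have hsum : ∀ j : ℕ, Summable
      (fun m : ℕ => |∫ l, l ^ (2 * (j + m)) ∂ρ₀| * t ^ m / m.factorial) := by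
    intro j
    refine Summable.of_nonneg_of_le (fun m => by positivity) (fun m => ?_) (hbsum j)
    rw [mul_div_assoc]
    exact mul_le_mul_of_nonneg_right (hsb _) (by positivity)
  -- integrability of exp(l² t) multiplied by monomials
  have hexpint : ∀ n : ℕ, Integrable (fun l : ℝ => l ^ n * Real.exp (l ^ 2 * t)) ρ₀ := by
    intro n
    refine Integrable.mono' (integrable_const (C ^ n * Real.exp (C ^ 2 * t)))
      (((continuous_pow n).mul (((continuous_pow 2).mul continuous_const).rexp)).aestronglyMeasurable) ?_
    filter_upwards [hae] with l hl
    rw [Real.norm_eq_abs, abs_mul, abs_pow, Real.abs_exp]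
    refine mul_le_mul (pow_le_pow_left₀ (abs_nonneg l) hl n)
      (Real.exp_le_exp.mpr (mul_le_mul_of_nonneg_right ?_ ht)) (Real.exp_pos _).le (by positivity)
    calc l ^ 2 = |l| ^ 2 := (sq_abs l).symm
    _ ≤ C ^ 2 := pow_le_pow_left₀ (abs_nonneg l) hl 2
  -- the key series identity
  have hkey : ∀ j : ℕ, ∫ l, l ^ (2 * j) * Real.exp (l ^ 2 * t) ∂ρ₀ =
      ∑' m : ℕ, (∫ l, l ^ (2 * (j + m)) ∂ρ₀) * t ^ m / m.factorial := by
    intro j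
    have hFi : ∀ m : ℕ, Integrable
        (fun l : ℝ => l ^ (2 * (j + m)) * (t ^ m / m.factorial)) ρ₀ :=
      fun m => (hint _).mul_const _
    have hFs : Summable fun m : ℕ =>
        ∫ l, ‖l ^ (2 * (j + m)) * (t ^ m / m.factorial)‖ ∂ρ₀ := by
      refine Summable.of_nonneg_of_le (fun m => integral_nonneg fun l => norm_nonneg _)
        (fun m => ?_) (hbsum j)
      have : ∫ l, ‖l ^ (2 * (j + m)) * (t ^ m / m.factorial)‖ ∂ρ₀ ≤
          ∫ _, C ^ (2 * (j + m)) * (t ^ m / m.factorial) ∂ρ₀ := by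
        refine integral_mono_ae (hFi m).norm (integrable_const _) ?_
        filter_upwards [hae] with l hl
        rw [Real.norm_eq_abs, abs_mul, abs_pow,
          abs_of_nonneg (show (0:ℝ) ≤ t ^ m / m.factorial by positivity)]
        exact mul_le_mul_of_nonneg_right (pow_le_pow_left₀ (abs_nonneg l) hl _)
          (by positivity)
      simpa using this
    have hswap := integral_tsum_of_summable_integral_norm hFi hFs
    have hpt : ∀ l : ℝ, (∑' m : ℕ, l ^ (2 * (j + m)) * (t ^ m / m.factorial)) =
        l ^ (2 * j) * Real.exp (l ^ 2 * t) := by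
      intro l
      rw [Real.exp_eq_exp_ℝ, NormedSpace.exp_eq_tsum_div, ← tsum_mul_left]
      congr 1; funext m
      rw [mul_add, pow_add, mul_pow, ← pow_mul]
      ring
    calc ∫ l, l ^ (2 * j) * Real.exp (l ^ 2 * t) ∂ρ₀
        = ∫ l, ∑' m : ℕ, l ^ (2 * (j + m)) * (t ^ m / m.factorial) ∂ρ₀ := by
          congr 1; funext l; rw [hpt]
      _ = ∑' m : ℕ, ∫ l, l ^ (2 * (j + m)) * (t ^ m / m.factorial) ∂ρ₀ := hswap.symm
      _ = ∑' m : ℕ, (∫ l, l ^ (2 * (j + m)) ∂ρ₀) * t ^ m / m.factorial := by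
          congr 1; funext m
          rw [integral_mul_const, mul_div_assoc]
  -- denominator value and positivity
  have hA0 : ∫ l, Real.exp (l ^ 2 * t) ∂ρ₀ = ∫ l, l ^ (2 * 0) * Real.exp (l ^ 2 * t) ∂ρ₀ := by
    simp
  have hA0pos : (0:ℝ) < ∫ l, Real.exp (l ^ 2 * t) ∂ρ₀ := by
    have h1 : (1:ℝ) ≤ ∫ l, Real.exp (l ^ 2 * t) ∂ρ₀ := by
      have := integral_mono (integrable_const (1:ℝ)) (by simpa using hexpint 0)
        (fun l => Real.one_le_exp (by positivity))
      simpa using this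
    linarith
  -- the lintegral normalization
  have hZ : (∫⁻ l, ENNReal.ofReal (Real.exp (l ^ 2 * t)) ∂ρ₀) =
      ENNReal.ofReal (∫ l, Real.exp (l ^ 2 * t) ∂ρ₀) := by
    rw [← ofReal_integral_eq_lintegral_ofReal (by simpa using hexpint 0)
      (ae_of_all _ fun l => (Real.exp_pos _).le)]
  -- compute moment at time t
  have hmt : moment ρ₀ (2 * k) t =
      (∫ l, Real.exp (l ^ 2 * t) ∂ρ₀)⁻¹ * ∫ l, l ^ (2 * k) * Real.exp (l ^ 2 * t) ∂ρ₀ := by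
    rw [moment, evolvedMeasure, integral_smul_measure, hZ]
    have hwd : ∫ l, l ^ (2 * k) ∂(ρ₀.withDensity fun l => ENNReal.ofReal (Real.exp (l ^ 2 * t)))
        = ∫ l, l ^ (2 * k) * Real.exp (l ^ 2 * t) ∂ρ₀ := by
      have hmeas : Measurable (fun l : ℝ => (Real.exp (l ^ 2 * t)).toNNReal) := by fun_prop
      rw [show (fun l : ℝ => ENNReal.ofReal (Real.exp (l ^ 2 * t))) =
          (fun l : ℝ => ((Real.exp (l ^ 2 * t)).toNNReal : ENNReal)) from rfl,
        integral_withDensity_eq_integral_smul hmeas]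
      congr 1; funext l
      rw [NNReal.smul_def, smul_eq_mul, Real.coe_toNNReal _ (Real.exp_pos _).le]
      ring
    rw [hwd, ENNReal.toReal_inv, ENNReal.toReal_ofReal hA0pos.le, smul_eq_mul]
  refine ⟨by simpa only [hm0] using hsum k, ?_, ?_⟩
  · have := hsum 0
    simp only [zero_add] at this
    simpa only [hm0] using this
  · rw [hmt, hA0, hkey 0, hkey k]
    simp only [hm0, zero_add]
    rw [div_eq_inv_mul]
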